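/- Let $\Theta, \Theta^{old}, E \in \mathbb{R}^{d\times p}$ and let $A \in \mathbb{R}^{d\times k}$ have orthonormal columns ($A^\top A = I_k$). Define $\Theta^{new} = \Theta^{old} + A A^\top E$. If $\|\Theta - \Theta^{old} - E\|_F < \tfrac{1}{2}\|A^\top E\|_F$, then $\|\Theta - \Theta^{new}\|_F < \|\Theta - \Theta^{old}\|_F$. -/

import Mathlib

open Matrix

/-- Frobenius norm of a real matrix. -/
noncomputable def frobNorm {d p : ℕ} (M : Matrix (Fin d) (Fin p) ℝ) : ℝ :=
  Real.sqrt (∑ i, ∑ j, (M i j) ^ 2)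

section aux

variable {m n l : Type*} [Fintype m] [Fintype n] [Fintype l]

/-- Frobenius inner product. -/
noncomputable def fip (X Y : Matrix m n ℝ) : ℝ := ∑ i, ∑ j, X i j * Y i j

lemma fip_trace (X Y : Matrix m n ℝ) : fip X Y = Matrix.trace (Xᵀ * Y) := by
  simp [fip, Matrix.trace, Matrix.mul_apply, Matrix.diag]
  rw [Finset.sum_comm]

lemma fip_comm (X Y : Matrix m n ℝ) : fip X Y = fip Y X := by
  simp [fip, mul_comm]

lemma fip_adj (A : Matrix m l ℝ) (B : Matrix l n ℝ) (C : Matrix m n ℝ) :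
    fip (A * B) C = fip B (Aᵀ * C) := by
  simp [fip_trace, Matrix.transpose_mul, Matrix.mul_assoc]

lemma fip_self_nonneg (X : Matrix m n ℝ) : 0 ≤ fip X X :=
  Finset.sum_nonneg fun _ _ => Finset.sum_nonneg fun _ _ => mul_self_nonneg _

lemma fip_cauchy (X Y : Matrix m n ℝ) :
    fip X Y ≤ Real.sqrt (fip X X) * Real.sqrt (fip Y Y) := by
  have := Real.sum_mul_le_sqrt_mul_sqrt Finset.univ
    (fun p : m × n => X p.1 p.2) (fun p : m × n => Y p.1 p.2)
  simpa [fip, Fintype.sum_prod_type, sq] using this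

lemma frobNorm_eq {d p : ℕ} (M : Matrix (Fin d) (Fin p) ℝ) :
    frobNorm M = Real.sqrt (fip M M) := by
  simp [frobNorm, fip, sq]

end aux

/-- Rank-update improvement: if the surrogate error `E` is accurate enough, the updated
reduced solution `Θold + A Aᵀ E` is strictly closer to `Θ` than `Θold`. -/
theorem rank_update_improvement {d p k : ℕ}
    (Θ Θold E : Matrix (Fin d) (Fin p) ℝ) (A : Matrix (Fin d) (Fin k) ℝ)
    (hA : Aᵀ * A = 1)
    (Θnew : Matrix (Fin d) (Fin p) ℝ) (hnew : Θnew = Θold + A * Aᵀ * E)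
    (h : frobNorm (Θ - Θold - E) < (1 / 2) * frobNorm (Aᵀ * E)) :
    frobNorm (Θ - Θnew) < frobNorm (Θ - Θold) := by
  set R := Θ - Θold with hR
  set B := Aᵀ * E with hB
  set S := Θ - Θold - E with hS
  have hdiff : Θ - Θnew = R - A * B := by
    rw [hnew, hB, hR, Matrix.mul_assoc]
    abel_nf
  -- norms
  have hBB : fip (A * B) (A * B) = fip B B := by
    rw [fip_adj, ← Matrix.mul_assoc, hA, Matrix.one_mul]
  have hRE : R = S + E := by rw [hS, hR]; abel_nf
  have hRAB : fip R (A * B) = fip S (A * B) + fip B B := by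
    have h1 : fip E (A * B) = fip B B := by
      rw [fip_comm, fip_adj, ← hB]
    have : fip R (A * B) = fip S (A * B) + fip E (A * B) := by
      rw [hRE]; simp [fip, add_mul, Finset.sum_add_distrib]
    rw [this, h1]
  have hexp : fip (R - A * B) (R - A * B)
      = fip R R - fip B B - 2 * fip S (A * B) := by
    have : fip (R - A * B) (R - A * B)
        = fip R R - 2 * fip R (A * B) + fip (A * B) (A * B) := by
      simp only [fip, Matrix.sub_apply]
      rw [Finset.mul_sum]
      simp only [Finset.mul_sum, ← Finset.sum_sub_distrib, ← Finset.sum_add_distrib]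
      congr 1; ext i; congr 1; ext j
      ring
    rw [this, hRAB, hBB]; ring
  -- positivity of B
  have hSnn : 0 ≤ frobNorm S := by rw [frobNorm_eq]; exact Real.sqrt_nonneg _
  have hBpos : 0 < frobNorm B := by nlinarith [h, hSnn]
  -- Cauchy-Schwarz bound
  have hcs : -fip S (A * B) ≤ frobNorm S * frobNorm B := by
    have := fip_cauchy (-S) (A * B)
    have hneg : fip (-S) (A * B) = -fip S (A * B) := by
      simp [fip, Finset.sum_neg_distrib]
    have hnn : fip (-S) (-S) = fip S S := by simp [fip]
    rw [hneg, hnn] at this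
    have hABnorm : Real.sqrt (fip (A * B) (A * B)) = frobNorm B := by
      rw [hBB, frobNorm_eq]
    rw [hABnorm] at this
    rw [frobNorm_eq]
    exact this
  have hBsq : frobNorm B ^ 2 = fip B B := by
    rw [frobNorm_eq]; exact Real.sq_sqrt (fip_self_nonneg B)
  have hbound : -fip S (A * B) < (1/2) * fip B B := by
    calc -fip S (A * B) ≤ frobNorm S * frobNorm B := hcs
      _ < ((1/2) * frobNorm B) * frobNorm B := by
          exact mul_lt_mul_of_pos_right h hBpos
      _ = (1/2) * fip B B := by rw [← hBsq]; ring
  have hlt : fip (R - A * B) (R - A * B) < fip R R := by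
    rw [hexp]; nlinarith [hBsq, sq_nonneg (frobNorm B)]
  rw [hdiff, frobNorm_eq, frobNorm_eq]
  exact Real.sqrt_lt_sqrt (fip_self_nonneg _) hlt
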